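/- Let A be a unital Banach algebra, A₀, B ∈ A with A₀ invertible, and set L(x,t) = exp(A₀ x + A₀³ t) B. On the open set Ω where both I + L and I - L are invertible, the function Q̃ := (I + L)⁻¹ A₀ (I - L) satisfies Q̃_xx = Q̃ Q̃_x. -/

import Mathlib

variable {A : Type*} [NormedRing A] [NormedAlgebra ℝ A] [CompleteSpace A]

/-- partial derivative in the first (space) variable -/
noncomputable def px (Q : ℝ × ℝ → A) : ℝ × ℝ → A := fun p => deriv (fun x => Q (x, p.2)) p.1

/-- partial derivative in the second (time) variable -/
noncomputable def pt (Q : ℝ × ℝ → A) : ℝ × ℝ → A := fun p => deriv (fun t => Q (p.1, t)) p.2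

theorem stmt_6 (A₀ B : A) (hA : IsUnit A₀)
    (L : ℝ × ℝ → A) (hL : L = fun p : ℝ × ℝ => NormedSpace.exp (p.1 • A₀ + p.2 • A₀ ^ 3) * B)
    (Qt : ℝ × ℝ → A) (hQt : Qt = fun p => Ring.inverse (1 + L p) * A₀ * (1 - L p)) :
    ∀ p : ℝ × ℝ, IsUnit (1 + L p) → IsUnit (1 - L p) →
      px (px Qt) p = Qt p * px Qt p := by
  rintro ⟨x₀, t₀⟩ h1 _h2
  subst hL hQt
  set l : ℝ → A := fun x => NormedSpace.exp (x • A₀ + t₀ • A₀ ^ 3) * B with hl_def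
  have hexp : ∀ x : ℝ, NormedSpace.exp (x • A₀ + t₀ • A₀ ^ 3)
      = NormedSpace.exp (x • A₀) * NormedSpace.exp (t₀ • A₀ ^ 3) := by
    intro x
    let +nondep : NormedAlgebra ℚ A := .restrictScalars ℚ ℝ A
    exact NormedSpace.exp_add_of_commute
      (((Commute.refl A₀).pow_right 3).smul_left x |>.smul_right t₀)
  have hld : ∀ x : ℝ, HasDerivAt l (A₀ * l x) x := by
    intro x
    have h0 : HasDerivAt (fun y : ℝ => NormedSpace.exp (y • A₀))
        (A₀ * NormedSpace.exp (x • A₀)) x := hasDerivAt_exp_smul_const' A₀ x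
    have h1' := h0.mul_const (NormedSpace.exp (t₀ • A₀ ^ 3) * B)
    have heq : l = fun y : ℝ =>
        NormedSpace.exp (y • A₀) * (NormedSpace.exp (t₀ • A₀ ^ 3) * B) := by
      funext y; simp [hl_def, hexp y, mul_assoc]
    rw [heq]
    convert h1' using 1
    simp [hexp x, mul_assoc]
  set u : ℝ → A := fun x => Ring.inverse (1 + l x) with hu_def
  set S : Set ℝ := (fun x => 1 + l x) ⁻¹' {y : A | IsUnit y} with hS_def
  have hcl : Continuous l := continuous_iff_continuousAt.mpr fun x => (hld x).continuousAt
  have hS_open : IsOpen S := Units.isOpen.preimage (continuous_const.add hcl)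
  have hx₀S : x₀ ∈ S := h1
  have hud : ∀ x ∈ S, HasDerivAt u (-(u x * (A₀ * l x) * u x)) x := by
    intro x hx
    obtain ⟨V, hV⟩ := hx
    have hV' : (V : A) = 1 + l x := hV
    have hinv : HasFDerivAt Ring.inverse
        (-ContinuousLinearMap.mulLeftRight ℝ A ↑V⁻¹ ↑V⁻¹) ((1 : A) + l x) := by
      rw [← hV']; exact hasFDerivAt_ringInverse V
    have hadd : HasDerivAt (fun y : ℝ => (1 : A) + l y) (A₀ * l x) x := by
      simpa using (hld x).const_add 1
    have hc := hinv.comp_hasDerivAt x hadd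
    have huV : u x = ↑V⁻¹ := by rw [hu_def]; simp [← hV']
    convert hc using 1
    · rfl
    · rfl
    · simp [huV]
  have hl1 : ∀ x : ℝ, HasDerivAt (fun y => (1 : A) - l y) (0 - A₀ * l x) x :=
    fun x => (hasDerivAt_const x (1 : A)).sub (hld x)
  set q' : ℝ → A := fun x =>
    (-(u x * (A₀ * l x) * u x) * A₀) * (1 - l x) + (u x * A₀) * (0 - A₀ * l x) with hq'_def
  have hqd : ∀ x ∈ S, HasDerivAt (fun y => u y * A₀ * (1 - l y)) (q' x) x := by
    intro x hx
    exact ((hud x hx).mul_const A₀).mul (hl1 x)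
  have hpx : ∀ x ∈ S, px (fun p : ℝ × ℝ =>
      Ring.inverse (1 + NormedSpace.exp (p.1 • A₀ + p.2 • A₀ ^ 3) * B) * A₀ *
        (1 - NormedSpace.exp (p.1 • A₀ + p.2 • A₀ ^ 3) * B)) (x, t₀) = q' x := by
    intro x hx
    exact (hqd x hx).deriv
  have hEq : (fun x => px (fun p : ℝ × ℝ =>
      Ring.inverse (1 + NormedSpace.exp (p.1 • A₀ + p.2 • A₀ ^ 3) * B) * A₀ *
        (1 - NormedSpace.exp (p.1 • A₀ + p.2 • A₀ ^ 3) * B)) (x, t₀)) =ᶠ[nhds x₀] q' := by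
    filter_upwards [hS_open.mem_nhds hx₀S] with x hx using hpx x hx
  have hud₀ := hud x₀ hx₀S
  have hld₀ := hld x₀
  have hll : HasDerivAt (fun y => A₀ * l y) (A₀ * (A₀ * l x₀)) x₀ := hld₀.const_mul A₀
  have hq'd : HasDerivAt q'
      (((-((-(u x₀ * (A₀ * l x₀) * u x₀)) * (A₀ * l x₀) * u x₀ +
            u x₀ * (A₀ * (A₀ * l x₀)) * u x₀ +
            u x₀ * (A₀ * l x₀) * (-(u x₀ * (A₀ * l x₀) * u x₀)))) * A₀) * (1 - l x₀) +
          (-(u x₀ * (A₀ * l x₀) * u x₀) * A₀) * (0 - A₀ * l x₀) +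
        (((-(u x₀ * (A₀ * l x₀) * u x₀)) * A₀) * (0 - A₀ * l x₀) +
          (u x₀ * A₀) * (0 - A₀ * (A₀ * l x₀)))) x₀ := by
    have huc : HasDerivAt (fun y => u y * (A₀ * l y) * u y)
        ((-(u x₀ * (A₀ * l x₀) * u x₀)) * (A₀ * l x₀) * u x₀ +
          u x₀ * (A₀ * (A₀ * l x₀)) * u x₀ +
          u x₀ * (A₀ * l x₀) * (-(u x₀ * (A₀ * l x₀) * u x₀))) x₀ := by
      have hm := (hud₀.mul hll).mul hud₀
      convert hm using 1
      · rfl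
      · simp only [Pi.mul_apply]; noncomm_ring
    have t1 : HasDerivAt (fun y => (-(u y * (A₀ * l y) * u y) * A₀) * (1 - l y))
        (((-((-(u x₀ * (A₀ * l x₀) * u x₀)) * (A₀ * l x₀) * u x₀ +
            u x₀ * (A₀ * (A₀ * l x₀)) * u x₀ +
            u x₀ * (A₀ * l x₀) * (-(u x₀ * (A₀ * l x₀) * u x₀)))) * A₀) * (1 - l x₀) +
          (-(u x₀ * (A₀ * l x₀) * u x₀) * A₀) * (0 - A₀ * l x₀)) x₀ :=
      ((huc.neg).mul_const A₀).mul (hl1 x₀)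
    have t2 : HasDerivAt (fun y => (u y * A₀) * (0 - A₀ * l y))
        (((-(u x₀ * (A₀ * l x₀) * u x₀)) * A₀) * (0 - A₀ * l x₀) +
          (u x₀ * A₀) * (0 - A₀ * (A₀ * l x₀))) x₀ :=
      (hud₀.mul_const A₀).mul ((hasDerivAt_const x₀ (0 : A)).sub hll)
    exact t1.add t2
  obtain ⟨V, hV⟩ := h1
  have hV' : (V : A) = 1 + l x₀ := hV
  have huV : u x₀ = ↑V⁻¹ := by rw [hu_def]; simp [← hV']
  have hlV : l x₀ = ↑V - 1 := by rw [hV']; abel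
  have hpxF : px (fun p : ℝ × ℝ =>
      Ring.inverse (1 + NormedSpace.exp (p.1 • A₀ + p.2 • A₀ ^ 3) * B) * A₀ *
        (1 - NormedSpace.exp (p.1 • A₀ + p.2 • A₀ ^ 3) * B)) (x₀, t₀) = q' x₀ :=
    hpx x₀ hx₀S
  calc px (px (fun p : ℝ × ℝ =>
        Ring.inverse (1 + (fun p : ℝ × ℝ => NormedSpace.exp (p.1 • A₀ + p.2 • A₀ ^ 3) * B) p)
          * A₀ *
          (1 - (fun p : ℝ × ℝ => NormedSpace.exp (p.1 • A₀ + p.2 • A₀ ^ 3) * B) p))) (x₀, t₀)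
      = deriv q' x₀ := hEq.deriv_eq
    _ = _ := hq'd.deriv
    _ = (u x₀ * A₀ * (1 - l x₀)) * q' x₀ := by
        simp only [hq'_def, huV, hlV]
        simp only [mul_sub, sub_mul, mul_add, add_mul, mul_one, one_mul, mul_assoc, neg_mul,
          neg_sub, Units.inv_mul_cancel_left, Units.mul_inv_cancel_left, two_mul, sub_zero,
          zero_sub, mul_neg, neg_neg, mul_zero, zero_mul, neg_zero, add_zero, zero_add]
        noncomm_ring
    _ = _ := by rw [hpxF]
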